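/- Let X₁, X₂ be i.i.d. nonnegative random variables with distribution function F of unbounded support. For any constant c ≥ 0, lim_{K→∞} limsup_{x→∞} P(max(X₁,X₂) > x - c and min(X₁,X₂) > K | X₁ + X₂ > x) = 0. -/

import Mathlib

open MeasureTheory Filter Set
open scoped ENNReal

/-- Tail of a distribution: `F̄(x) = P(X > x)`. -/
noncomputable def tail (μ : Measure ℝ) (x : ℝ) : ℝ := (μ (Set.Ioi x)).toReal

/-- Conditional probability `P(A | X₁ + X₂ > x)` for two i.i.d. variables with law `μ`. -/
noncomputable def condPair (μ : Measure ℝ) (A : Set (ℝ × ℝ)) (x : ℝ) : ℝ :=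
  ((μ.prod μ) (A ∩ {p | x < p.1 + p.2})).toReal / ((μ.prod μ) {p | x < p.1 + p.2}).toReal

lemma tail_tendsto (μ : Measure ℝ) [IsProbabilityMeasure μ] :
    Tendsto (fun K : ℝ => (μ (Set.Ioi K)).toReal) atTop (nhds 0) := by
  have heq : ∀ K : ℝ, (μ (Set.Ioi K)).toReal = 1 - ProbabilityTheory.cdf μ K := by
    intro K
    rw [ProbabilityTheory.cdf_eq_real, measureReal_def]
    have h1 : μ (Set.Ioi K) = 1 - μ (Set.Iic K) := by
      rw [← Set.compl_Iic, measure_compl measurableSet_Iic (measure_ne_top μ _), measure_univ]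
    rw [h1, ENNReal.toReal_sub_of_le prob_le_one ENNReal.one_ne_top, ENNReal.toReal_one]
  simp only [heq]
  have := (tendsto_const_nhds (x := (1:ℝ)) (f := atTop)).sub
    (ProbabilityTheory.tendsto_cdf_atTop μ)
  simpa using this

theorem stmt0 (μ : Measure ℝ) [IsProbabilityMeasure μ]
    (hnn : μ (Set.Iio 0) = 0) (hub : ∀ x : ℝ, 0 < μ (Set.Ioi x))
    (c : ℝ) (hc : 0 ≤ c) :
    Tendsto (fun K : ℝ => limsup (fun x : ℝ =>
        condPair μ {p | x - c < max p.1 p.2 ∧ K < min p.1 p.2} x) atTop)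
      atTop (nhds 0) := by
  set d : ℝ := (μ (Set.Ioi c)).toReal with hd
  have hdpos : 0 < d := ENNReal.toReal_pos (hub c).ne' (measure_ne_top μ _)
  -- pointwise bound: condPair ≤ 2 * (μ (Ioi K)).toReal / d
  have key : ∀ K x : ℝ,
      condPair μ {p | x - c < max p.1 p.2 ∧ K < min p.1 p.2} x
        ≤ 2 * (μ (Set.Ioi K)).toReal / d := by
    intro K x
    set a : ℝ≥0∞ := μ (Set.Ioi (x - c)) with ha
    set b : ℝ≥0∞ := μ (Set.Ioi K) with hb
    have hafin : a ≠ ⊤ := measure_ne_top μ _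
    have hbfin : b ≠ ⊤ := measure_ne_top μ _
    have hdfin : μ (Set.Ioi c) ≠ ⊤ := measure_ne_top μ _
    have hapos : 0 < a := hub _
    -- numerator bound
    have hnum : (μ.prod μ) ({p : ℝ × ℝ | x - c < max p.1 p.2 ∧ K < min p.1 p.2}
        ∩ {p | x < p.1 + p.2}) ≤ 2 * (a * b) := by
      have hsub : {p : ℝ × ℝ | x - c < max p.1 p.2 ∧ K < min p.1 p.2}
          ∩ {p | x < p.1 + p.2}
          ⊆ (Set.Ioi (x - c) ×ˢ Set.Ioi K) ∪ (Set.Ioi K ×ˢ Set.Ioi (x - c)) := by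
        rintro ⟨p1, p2⟩ ⟨⟨hmax, hmin⟩, -⟩
        rcases max_cases p1 p2 with ⟨hm, hle⟩ | ⟨hm, hlt⟩
        · left
          exact ⟨by simpa [hm] using hmax, lt_of_lt_of_le hmin (min_le_right _ _)⟩
        · right
          exact ⟨lt_of_lt_of_le hmin (min_le_left _ _), by simpa [hm] using hmax⟩
      calc (μ.prod μ) ({p : ℝ × ℝ | x - c < max p.1 p.2 ∧ K < min p.1 p.2}
            ∩ {p | x < p.1 + p.2})
          ≤ (μ.prod μ) ((Set.Ioi (x - c) ×ˢ Set.Ioi K) ∪ (Set.Ioi K ×ˢ Set.Ioi (x - c))) :=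
            measure_mono hsub
        _ ≤ (μ.prod μ) (Set.Ioi (x - c) ×ˢ Set.Ioi K)
              + (μ.prod μ) (Set.Ioi K ×ˢ Set.Ioi (x - c)) := measure_union_le _ _
        _ = a * b + b * a := by rw [Measure.prod_prod, Measure.prod_prod]
        _ = 2 * (a * b) := by ring
    -- denominator bound
    have hden : a * μ (Set.Ioi c) ≤ (μ.prod μ) {p : ℝ × ℝ | x < p.1 + p.2} := by
      rw [← Measure.prod_prod]
      refine measure_mono ?_
      rintro ⟨p1, p2⟩ ⟨h1, h2⟩
      simp only [Set.mem_setOf_eq]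
      have : x - c < p1 := h1
      have : c < p2 := h2
      linarith
    -- combine
    have hdenpos : 0 < ((μ.prod μ) {p : ℝ × ℝ | x < p.1 + p.2}).toReal := by
      refine ENNReal.toReal_pos ?_ (measure_ne_top _ _)
      have : (0 : ℝ≥0∞) < a * μ (Set.Ioi c) :=
        ENNReal.mul_pos hapos.ne' (hub c).ne'
      exact (lt_of_lt_of_le this hden).ne'
    have hnumR : ((μ.prod μ) ({p : ℝ × ℝ | x - c < max p.1 p.2 ∧ K < min p.1 p.2}
        ∩ {p | x < p.1 + p.2})).toReal ≤ 2 * a.toReal * b.toReal := by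
      have := ENNReal.toReal_mono (by finiteness) hnum
      rwa [ENNReal.toReal_mul, ENNReal.toReal_mul, ENNReal.toReal_ofNat, ← mul_assoc] at this
    have hdenR : a.toReal * d ≤ ((μ.prod μ) {p : ℝ × ℝ | x < p.1 + p.2}).toReal := by
      have := ENNReal.toReal_mono (measure_ne_top _ _) hden
      rwa [ENNReal.toReal_mul] at this
    have hadpos : 0 < a.toReal * d :=
      mul_pos (ENNReal.toReal_pos hapos.ne' hafin) hdpos
    unfold condPair
    calc ((μ.prod μ) ({p : ℝ × ℝ | x - c < max p.1 p.2 ∧ K < min p.1 p.2}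
            ∩ {p | x < p.1 + p.2})).toReal
          / ((μ.prod μ) {p : ℝ × ℝ | x < p.1 + p.2}).toReal
        ≤ (2 * a.toReal * b.toReal) / (a.toReal * d) := by
          exact div_le_div₀ (by positivity) hnumR hadpos hdenR
      _ = 2 * b.toReal / d := by
          field_simp
          exact mul_div_cancel_left₀ _ (ENNReal.toReal_pos hapos.ne' hafin).ne'
  have hnonneg : ∀ K x : ℝ,
      0 ≤ condPair μ {p | x - c < max p.1 p.2 ∧ K < min p.1 p.2} x := by
    intro K x
    unfold condPair
    positivity
  -- squeeze
  have hupper : Tendsto (fun K : ℝ => 2 * (μ (Set.Ioi K)).toReal / d) atTop (nhds 0) := by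
    have := ((tail_tendsto μ).const_mul 2).div_const d
    simpa using this
  refine tendsto_of_tendsto_of_tendsto_of_le_of_le (tendsto_const_nhds) hupper ?_ ?_
  · intro K
    apply Filter.le_limsup_of_frequently_le
    · exact Frequently.of_forall (fun x => hnonneg K x)
    · exact ⟨2 * (μ (Set.Ioi K)).toReal / d, eventually_map.2 (Eventually.of_forall (key K))⟩
  · intro K
    apply Filter.limsup_le_of_le
    · exact isCoboundedUnder_le_of_le atTop (fun x => hnonneg K x)
    · exact Eventually.of_forall (key K)
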